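/- Let δ > 0, β₀ > 0, τ > 0 and β₁ ≥ 0 with β₀β₁ < δ. Then every complex number λ satisfying Δ(λ,τ) = 0 has strictly negative real part. (Consequently the nontrivial equilibrium is linearly stable for all τ > 0 when β₁ ≥ 0.) -/

import Mathlib

/-- The characteristic function
`Δ(λ,τ) = λ + δ + β₀β₁ − (2β₀β₁/τ)∫_{−τ}^{0} e^{λ s} ds`, for `λ ∈ ℂ`. -/
noncomputable def charFn (δ β₀ β₁ τ : ℝ) (lam : ℂ) : ℂ :=
  lam + (δ : ℂ) + (β₀ : ℂ) * (β₁ : ℂ) -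
    ((2 * β₀ * β₁ / τ : ℝ) : ℂ) * ∫ s in (-τ)..(0 : ℝ), Complex.exp (lam * (s : ℂ))

/-- if `β₁ ≥ 0` and `β₀ β₁ < δ`, every complex zero of `Δ(·, τ)` has strictly
negative real part (linear stability of the nontrivial equilibrium for all `τ > 0`). -/
theorem charFn_zeros_neg_re_of_beta1_nonneg
    (δ β₀ β₁ τ : ℝ) (hδ : 0 < δ) (hβ₀ : 0 < β₀) (hτ : 0 < τ)
    (hβ₁ : 0 ≤ β₁) (hlt : β₀ * β₁ < δ) :
    ∀ lam : ℂ, charFn δ β₀ β₁ τ lam = 0 → lam.re < 0 := by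
  intro lam h
  by_contra hre
  push_neg at hre
  set c : ℝ := 2 * β₀ * β₁ / τ with hc
  have hc0 : 0 ≤ c := by positivity
  have hcont : Continuous fun s : ℝ => Complex.exp (lam * (s : ℂ)) := by continuity
  have hint : IntervalIntegrable (fun s : ℝ => Complex.exp (lam * (s : ℂ)))
      MeasureTheory.volume (-τ) 0 := hcont.intervalIntegrable _ _
  have heq : lam + (δ : ℂ) + (β₀ : ℂ) * (β₁ : ℂ)
      = (c : ℂ) * ∫ s in (-τ)..(0 : ℝ), Complex.exp (lam * (s : ℂ)) := by
    have h' := h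
    unfold charFn at h'
    linear_combination h'
  have hre_eq : lam.re + δ + β₀ * β₁
      = c * (∫ s in (-τ)..(0 : ℝ), Complex.exp (lam * (s : ℂ))).re := by
    have := congrArg Complex.re heq
    simpa [Complex.add_re, Complex.mul_re, Complex.ofReal_re, Complex.ofReal_im] using this
  have hIre : (∫ s in (-τ)..(0 : ℝ), Complex.exp (lam * (s : ℂ))).re
      = ∫ s in (-τ)..(0 : ℝ), (Complex.exp (lam * (s : ℂ))).re := by
    exact (Complex.reCLM.intervalIntegral_comp_comm hint).symm
  have hbound : ∫ s in (-τ)..(0 : ℝ), (Complex.exp (lam * (s : ℂ))).re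
      ≤ ∫ _s in (-τ)..(0 : ℝ), (1 : ℝ) := by
    apply intervalIntegral.integral_mono_on (by linarith)
    · exact (Complex.continuous_re.comp hcont).intervalIntegrable _ _
    · exact intervalIntegrable_const
    · intro s hs
      calc (Complex.exp (lam * (s : ℂ))).re
          ≤ ‖Complex.exp (lam * (s : ℂ))‖ := Complex.re_le_norm _
        _ = Real.exp ((lam * (s : ℂ)).re) := Complex.norm_exp _
        _ ≤ 1 := by
            rw [Real.exp_le_one_iff]
            have hres : (lam * (s : ℂ)).re = lam.re * s := by
              simp [Complex.mul_re]
            rw [hres]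
            exact mul_nonpos_of_nonneg_of_nonpos hre hs.2
  have hconst : (∫ _s in (-τ)..(0 : ℝ), (1 : ℝ)) = τ := by
    simp
  have hIreτ : (∫ s in (-τ)..(0 : ℝ), Complex.exp (lam * (s : ℂ))).re ≤ τ := by
    rw [hIre]; linarith [hbound, hconst.le]
  have hcτ : c * τ = 2 * (β₀ * β₁) := by
    rw [hc, div_mul_cancel₀ _ hτ.ne']; ring
  have : c * (∫ s in (-τ)..(0 : ℝ), Complex.exp (lam * (s : ℂ))).re ≤ 2 * (β₀ * β₁) := by
    calc c * _ ≤ c * τ := mul_le_mul_of_nonneg_left hIreτ hc0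
      _ = 2 * (β₀ * β₁) := hcτ
  linarith
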